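/- For every integer Δ ≥ 3, with a = 1/(3Δ), b = (Δ-1)/2, and H(x) = -x·log₂x - (1-x)·log₂(1-x) the binary entropy function, the inequality Δ > (H(a) + H(ab))/(H(a) - ab·H(1/b)) holds. -/

import Mathlib

/-- The binary entropy function `H(x) = -x log₂ x - (1-x) log₂ (1-x)`. -/
noncomputable def binEnt (x : ℝ) : ℝ :=
  -x * Real.logb 2 x - (1 - x) * Real.logb 2 (1 - x)

lemma log_le_half_sub_inv {x : ℝ} (hx : 1 ≤ x) : Real.log x ≤ (x - x⁻¹) / 2 := by
  set f : ℝ → ℝ := fun y => (y - y⁻¹) / 2 - Real.log y with hf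
  have hmono : MonotoneOn f (Set.Ici 1) := by
    apply monotoneOn_of_deriv_nonneg (convex_Ici 1)
    · apply ContinuousOn.sub
      · exact (continuousOn_id.sub (continuousOn_inv₀.mono (by
          intro y hy; simp only [Set.mem_compl_iff, Set.mem_singleton_iff]
          intro h; rw [h] at hy; simp at hy; linarith [hy]))).div_const 2
      · exact Real.continuousOn_log.mono (by
          intro y hy; simp only [Set.mem_compl_iff, Set.mem_singleton_iff]
          intro h; rw [h] at hy; simp at hy; linarith [hy])
    · intro y hy
      rw [interior_Ici] at hy
      have hy1 : (1:ℝ) < y := hy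
      have hy0 : y ≠ 0 := by positivity
      exact (((((hasDerivAt_id y).sub (hasDerivAt_inv hy0)).div_const 2).sub
        (Real.hasDerivAt_log hy0)).differentiableAt).differentiableWithinAt
    · intro y hy
      rw [interior_Ici] at hy
      have hy1 : (1:ℝ) < y := hy
      have hy0 : y ≠ 0 := by positivity
      have hd : HasDerivAt f ((1 - -(y^2)⁻¹)/2 - y⁻¹) y :=
        ((((hasDerivAt_id y).sub (hasDerivAt_inv hy0)).div_const 2).sub
          (Real.hasDerivAt_log hy0))
      rw [hd.deriv]
      have hy0' : (0:ℝ) < y := by linarith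
      have : (1 - -(y^2)⁻¹)/2 - y⁻¹ = (y-1)^2/(2*y^2) := by
        field_simp; ring
      rw [this]; positivity
  have h := hmono (Set.mem_Ici.mpr le_rfl) (Set.mem_Ici.mpr hx) hx
  have h1 : f 1 = 0 := by simp [hf]
  have h2 : f x = (x - x⁻¹)/2 - Real.log x := rfl
  rw [h1, h2] at h
  linarith

lemma binEnt_pos {x : ℝ} (h0 : 0 < x) (h1 : x < 1) : 0 < binEnt x := by
  unfold binEnt
  have h2 : Real.logb 2 x < 0 := Real.logb_neg one_lt_two h0 h1
  have h3 : Real.logb 2 (1 - x) < 0 := Real.logb_neg one_lt_two (by linarith) (by linarith)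
  nlinarith

lemma poly_aux (x l2 : ℝ) (hx4 : 4 ≤ x) (B7 : (0.6931:ℝ) < l2) :
    0 < 12 * x * (x - 1)^2 * (1/3 : ℝ) + 12 * (x - 1)^2 * 1
        - 24 * x * (x - 1) * (3 * l2 - 1 + (x - 1) / 8) + 24 * x^2 * (x - 1) * l2
        + 12 * x * (x - 1) * (-(x - 1))
        + 8 * (x - 1)^2 * (3 * x - 1) * 1
        + 12 * x^2 * (-(2 * (x - 2))) := by
  nlinarith [sq_nonneg (x - 4), mul_nonneg (sub_nonneg.mpr hx4) (sq_nonneg (x - 4)),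
    mul_nonneg (le_of_lt (sub_pos.mpr B7)) (sub_nonneg.mpr hx4),
    mul_nonneg (le_of_lt (sub_pos.mpr B7)) (sq_nonneg (x - 4)),
    mul_nonneg (mul_nonneg (le_of_lt (sub_pos.mpr B7)) (sub_nonneg.mpr hx4)) (sq_nonneg (x - 4)),
    sub_pos.mpr B7]

set_option maxHeartbeats 2000000 in
theorem stmt_15 (Δ : ℕ) (hΔ : 3 ≤ Δ) (a b : ℝ)
    (ha : a = 1 / (3 * Δ)) (hb : b = ((Δ : ℝ) - 1) / 2) :
    (binEnt a + binEnt (a * b)) / (binEnt a - a * b * binEnt (1 / b)) < Δ := by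
  rcases Nat.lt_or_ge Δ 4 with hc | hc
  · -- Δ = 3
    have h3 : Δ = 3 := by omega
    subst h3
    have hΔ3 : ((3:ℕ):ℝ) = 3 := by norm_num
    rw [hΔ3] at ha hb
    have ha' : a = 1/9 := by rw [ha]; norm_num
    have hb' : b = 1 := by rw [hb]; norm_num
    subst ha' hb'
    have hB : 0 < binEnt (1/9) := binEnt_pos (by norm_num) (by norm_num)
    have hb1 : binEnt 1 = 0 := by
      unfold binEnt; simp
    simp only [mul_one, one_div_one, hb1, mul_zero, sub_zero, hΔ3]
    rw [div_lt_iff₀ hB]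
    linarith
  · -- Δ ≥ 4
    set x : ℝ := (Δ : ℝ) with hxdef
    have hx4 : (4:ℝ) ≤ x := by rw [hxdef]; exact_mod_cast hc
    have hx0 : (0:ℝ) < x := by linarith
    have hx1 : (0:ℝ) < x - 1 := by linarith
    have hx3 : (0:ℝ) < x - 3 := by linarith
    have h3x : (0:ℝ) < 3 * x := by linarith
    have h3x1 : (0:ℝ) < 3 * x - 1 := by linarith
    have h5x1 : (0:ℝ) < 5 * x + 1 := by linarith
    have h6x : (0:ℝ) < 6 * x := by linarith
    have hl2 : (0:ℝ) < Real.log 2 := Real.log_pos one_lt_two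
    have hl2' : Real.log 2 ≠ 0 := ne_of_gt hl2
    -- argument simplifications
    have hab : a * b = (x - 1) / (6 * x) := by
      rw [ha, hb, div_mul_div_comm, one_mul]
      congr 1; ring
    have hib : 1 / b = 2 / (x - 1) := by
      rw [hb, one_div_div]
    -- ranges
    have ha01 : 0 < a ∧ a < 1 := by
      constructor
      · rw [ha]; positivity
      · rw [ha, div_lt_one h3x]; linarith
    have hab01 : 0 < a * b ∧ a * b < 1 := by
      rw [hab]
      constructor
      · positivity
      · rw [div_lt_one h6x]; linarith
    -- log abbreviations
    set L1 := Real.log x with hL1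
    set L2 := Real.log (x - 1) with hL2
    set L3 := Real.log (x - 3) with hL3
    set L4 := Real.log (3 * x - 1) with hL4
    set L5 := Real.log (5 * x + 1) with hL5
    set l2 := Real.log 2 with hl2def
    set l3 := Real.log 3 with hl3def
    -- log identities for the entropy arguments
    have r1 : Real.log (1 / (3 * x)) = -(l3 + L1) := by
      rw [one_div, Real.log_inv, Real.log_mul (by norm_num) (ne_of_gt hx0)]
    have r2 : Real.log (1 - 1 / (3 * x)) = L4 - (l3 + L1) := by
      have e : 1 - 1 / (3 * x) = (3 * x - 1) / (3 * x) := by field_simp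
      rw [e, Real.log_div (ne_of_gt h3x1) (ne_of_gt h3x),
        Real.log_mul (by norm_num) (ne_of_gt hx0)]
    have r3 : Real.log ((x - 1) / (6 * x)) = L2 - (l2 + l3 + L1) := by
      have e : (x - 1) / (6 * x) = (x - 1) / (2 * (3 * x)) := by congr 1; ring
      rw [e, Real.log_div (ne_of_gt hx1) (by positivity),
        Real.log_mul (by norm_num) (ne_of_gt h3x),
        Real.log_mul (by norm_num) (ne_of_gt hx0)]
      ring
    have r4 : Real.log (1 - (x - 1) / (6 * x)) = L5 - (l2 + l3 + L1) := by
      have e : 1 - (x - 1) / (6 * x) = (5 * x + 1) / (2 * (3 * x)) := by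
        field_simp; ring
      rw [e, Real.log_div (ne_of_gt h5x1) (by positivity),
        Real.log_mul (by norm_num) (ne_of_gt h3x),
        Real.log_mul (by norm_num) (ne_of_gt hx0)]
      ring
    have r5 : Real.log (2 / (x - 1)) = l2 - L2 := by
      rw [Real.log_div (by norm_num) (ne_of_gt hx1)]
    have r6 : Real.log (1 - 2 / (x - 1)) = L3 - L2 := by
      have e : 1 - 2 / (x - 1) = (x - 3) / (x - 1) := by
        field_simp; ring
      rw [e, Real.log_div (ne_of_gt hx3) (ne_of_gt hx1)]
    -- entropy evaluations (multiplied to clear denominators)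
    have E1 : 3 * x * (binEnt (1 / (3 * x)) * l2) =
        (l3 + L1) - (3 * x - 1) * (L4 - (l3 + L1)) := by
      unfold binEnt
      rw [Real.logb, Real.logb, r1, r2, ← hl2def]
      field_simp
    have E2 : 6 * x * (binEnt ((x - 1) / (6 * x)) * l2) =
        -((x - 1) * (L2 - (l2 + l3 + L1))) - (5 * x + 1) * (L5 - (l2 + l3 + L1)) := by
      unfold binEnt
      rw [Real.logb, Real.logb, r3, r4, ← hl2def]
      field_simp
      ring
    have E3 : (x - 1) * (binEnt (2 / (x - 1)) * l2) =
        -(2 * (l2 - L2)) - (x - 3) * (L3 - L2) := by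
      unfold binEnt
      rw [Real.logb, Real.logb, r5, r6, ← hl2def]
      field_simp
      ring
    -- the key identity
    have key : ((x) * (binEnt a - a * b * binEnt (1 / b)) - (binEnt a + binEnt (a * b)))
        * l2 * (72 * x^2 * (x - 1)) =
        12 * x * (x - 1)^2 * (l3 - l2) + 12 * (x - 1)^2 * (x * (L1 - L2))
        - 24 * x * (x - 1) * L2 + 24 * x^2 * (x - 1) * l2
        + 12 * x * (x - 1) * ((5 * x + 1) * (L5 - l2 - l3 - L1))
        + 8 * (x - 1)^2 * (3 * x - 1) * (3 * x * (l3 + L1 - L4))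
        + 12 * x^2 * ((x - 1) * (x - 3) * (L3 - L2)) := by
      have h6 : 6 * x * (a * b) = x - 1 := by
        rw [hab]; field_simp
      rw [show binEnt a = binEnt (1/(3*x)) by rw [ha],
        show binEnt (a*b) = binEnt ((x-1)/(6*x)) by rw [hab],
        show binEnt (1/b) = binEnt (2/(x-1)) by rw [hib]]
      linear_combination (24 * x * (x - 1)^2) * E1 - (12 * x * (x - 1)) * E2
        - (12 * x^2 * (x - 1)) * E3
        - (12 * x^2 * (x - 1) * (binEnt (2/(x-1)) * l2)) * h6
    -- bounds
    have B1 : 1/3 ≤ l3 - l2 := by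
      have h := Real.log_le_sub_one_of_pos (show (0:ℝ) < 2/3 by norm_num)
      rw [Real.log_div (by norm_num) (by norm_num), ← hl2def, ← hl3def] at h
      linarith
    have B2 : 1 ≤ x * (L1 - L2) := by
      have h := Real.log_le_sub_one_of_pos (show (0:ℝ) < (x-1)/x by positivity)
      rw [Real.log_div (ne_of_gt hx1) (ne_of_gt hx0), ← hL1, ← hL2] at h
      have h2 : (x-1)/x - 1 = -(1/x) := by field_simp; ring
      rw [h2] at h
      have h3 : 1/x ≤ L1 - L2 := by linarith
      rw [div_le_iff₀ hx0] at h3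
      linarith [h3]
    have B3 : L2 ≤ 3 * l2 - 1 + (x - 1) / 8 := by
      have h := Real.log_le_sub_one_of_pos (show (0:ℝ) < (x-1)/8 by positivity)
      rw [Real.log_div (ne_of_gt hx1) (by norm_num)] at h
      have h8 : Real.log 8 = 3 * l2 := by
        rw [hl2def, show (8:ℝ) = 2^3 by norm_num, Real.log_pow]; push_cast; ring
      rw [← hL2, h8] at h
      linarith
    have B4 : -(x - 1) ≤ (5 * x + 1) * (L5 - l2 - l3 - L1) := by
      have h := Real.log_le_sub_one_of_pos (show (0:ℝ) < (2*(3*x))/(5*x+1) by positivity)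
      rw [Real.log_div (by positivity) (ne_of_gt h5x1),
        Real.log_mul (by norm_num) (ne_of_gt h3x),
        Real.log_mul (by norm_num) (ne_of_gt hx0), ← hL1, ← hL5, ← hl2def, ← hl3def] at h
      have h2 : (2*(3*x))/(5*x+1) - 1 = (x - 1)/(5*x+1) := by field_simp; ring
      rw [h2] at h
      have h3 : l2 + l3 + L1 - L5 ≤ (x-1)/(5*x+1) := by linarith
      rw [le_div_iff₀ h5x1] at h3
      linarith [h3]
    have B5 : 1 ≤ 3 * x * (l3 + L1 - L4) := by
      have h := Real.log_le_sub_one_of_pos (show (0:ℝ) < (3*x-1)/(3*x) by positivity)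
      rw [Real.log_div (ne_of_gt h3x1) (ne_of_gt h3x),
        Real.log_mul (by norm_num) (ne_of_gt hx0), ← hL1, ← hL4, ← hl3def] at h
      have h2 : (3*x-1)/(3*x) - 1 = -(1/(3*x)) := by field_simp; ring
      rw [h2] at h
      have h3 : 1/(3*x) ≤ l3 + L1 - L4 := by linarith
      rw [div_le_iff₀ h3x] at h3
      linarith [h3]
    have B6 : (x - 1) * (x - 3) * (L2 - L3) ≤ 2 * (x - 2) := by
      have hr : (1:ℝ) ≤ (x - 1)/(x - 3) := by
        rw [le_div_iff₀ hx3]; linarith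
      have h := log_le_half_sub_inv hr
      rw [Real.log_div (ne_of_gt hx1) (ne_of_gt hx3), ← hL2, ← hL3] at h
      have hinv : ((x - 1)/(x - 3))⁻¹ = (x - 3)/(x - 1) := by
        rw [inv_div]
      rw [hinv] at h
      have e : ((x - 1) * (x - 3)) * (((x - 1)/(x - 3) - (x - 3)/(x - 1))/2) = 2 * (x - 2) := by
        field_simp; ring
      have h' := mul_le_mul_of_nonneg_left h (show (0:ℝ) ≤ (x - 1) * (x - 3) by positivity)
      rw [e] at h'
      linarith [h']
    have B7 : (0.6931:ℝ) < l2 := by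
      rw [hl2def]
      have := Real.log_two_gt_d9
      linarith
    -- the polynomial lower bound is positive
    have hpoly := poly_aux x l2 hx4 B7
    -- combine: multiplied expression is positive
    have T1a := mul_le_mul_of_nonneg_left B1 (show (0:ℝ) ≤ 12 * x * (x - 1)^2 by positivity)
    have T1b := mul_le_mul_of_nonneg_left B2 (show (0:ℝ) ≤ 12 * (x - 1)^2 by positivity)
    have T2 := mul_le_mul_of_nonneg_left B3 (show (0:ℝ) ≤ 24 * x * (x - 1) by positivity)
    have T4 := mul_le_mul_of_nonneg_left B4 (show (0:ℝ) ≤ 12 * x * (x - 1) by positivity)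
    have T5 := mul_le_mul_of_nonneg_left B5 (show (0:ℝ) ≤ 8 * (x - 1)^2 * (3 * x - 1) by positivity)
    have T6 := mul_le_mul_of_nonneg_left B6 (show (0:ℝ) ≤ 12 * x^2 by positivity)
    have hbig : 0 < ((x) * (binEnt a - a * b * binEnt (1 / b)) - (binEnt a + binEnt (a * b)))
        * l2 * (72 * x^2 * (x - 1)) := by
      rw [key]
      linarith [T1a, T1b, T2, T4, T5, T6, hpoly]
    -- deduce positivity of the difference
    have hC : (0:ℝ) < 72 * x^2 * (x - 1) := by positivity
    have hgl2 : 0 < ((x) * (binEnt a - a * b * binEnt (1 / b)) - (binEnt a + binEnt (a * b))) * l2 := by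
      rcases mul_pos_iff.mp hbig with ⟨h1, _⟩ | ⟨_, h2⟩
      · exact h1
      · linarith
    have hg : 0 < (x) * (binEnt a - a * b * binEnt (1 / b)) - (binEnt a + binEnt (a * b)) := by
      rcases mul_pos_iff.mp hgl2 with ⟨h1, _⟩ | ⟨_, h2⟩
      · exact h1
      · linarith
    -- numerator positive
    have hnum : 0 < binEnt a + binEnt (a * b) :=
      add_pos (binEnt_pos ha01.1 ha01.2) (binEnt_pos hab01.1 hab01.2)
    have hden : 0 < binEnt a - a * b * binEnt (1 / b) := by
      have hxD : 0 < x * (binEnt a - a * b * binEnt (1 / b)) := by linarith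
      rcases mul_pos_iff.mp hxD with ⟨_, h1⟩ | ⟨h2, _⟩
      · exact h1
      · linarith
    rw [div_lt_iff₀ hden]
    linarith [hg]
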